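/- Let (X,P) be an irreducible Markov chain on a countable state space, and suppose there exist ε ∈ (0,1) and a finite nonempty subset A ⊂ X with sup_{x∈X} Σ_{y∈X∖A} p(x,y) < ε. Then min_{x∈A} τ̄_x ≤ card(A)/(1−ε), where τ̄_x = Σ_{n≥1} n f^{(n)}(x,x) is the mean return time to x. -/

import Mathlib

open scoped Classical ENNReal

noncomputable section

/-- The `n`-step transition probabilities: the entries of the `n`-th matrix power of `p`. -/
def matPow {X : Type*} (p : X → X → ℝ) : ℕ → X → X → ℝ
  | 0 => fun x y => if x = y then 1 else 0
  | n + 1 => fun x y => ∑' z, matPow p n x z * p z y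

/-- The first-return probabilities `f⁽ⁿ⁾(x,y)`. -/
def fret {X : Type*} (p : X → X → ℝ) : ℕ → X → X → ℝ
  | 0 => fun _ _ => 0
  | 1 => fun x y => p x y
  | n + 2 => fun x y => ∑' z, if z = y then 0 else p x z * fret p (n + 1) z y

/-- `p` is a stochastic matrix. -/
def IsStochastic {X : Type*} (p : X → X → ℝ) : Prop :=
  (∀ x y, 0 ≤ p x y) ∧ (∀ x, Summable (p x)) ∧ (∀ x, ∑' y, p x y = 1)


namespace MRT

variable {X : Type*}

/-- Taboo transition probabilities: `Vt q t w n y` is the probability of going from `w`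
to `y` in `n` steps avoiding `t` at times `1, …, n`. -/
def Vt (q : X → X → ℝ≥0∞) (t w : X) : ℕ → X → ℝ≥0∞
  | 0 => fun y => if y = w then 1 else 0
  | n + 1 => fun y => if y = t then 0 else ∑' z, Vt q t w n z * q z y

variable (q : X → X → ℝ≥0∞)

lemma mass_zero (t w : X) : ∑' y, Vt q t w 0 y = 1 := by
  simp [Vt]

lemma ite_tsum_push {c : Prop} [Decidable c] (f : X → ℝ≥0∞) :
    (if c then 0 else ∑' z, f z) = ∑' z, (if c then 0 else f z) := by
  split <;> simp

lemma mass_step (hq : ∀ z, ∑' y, q z y = 1) (t w : X) (n : ℕ) :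
    ∑' y, Vt q t w n y
      = (∑' z, Vt q t w n z * q z t) + ∑' y, Vt q t w (n + 1) y := by
  have h1 : ∀ z, Vt q t w n z = Vt q t w n z * q z t
      + ∑' y, (if y = t then 0 else Vt q t w n z * q z y) := by
    intro z
    calc Vt q t w n z = Vt q t w n z * (q z t + ∑' y, if y = t then 0 else q z y) := by
          rw [← ENNReal.tsum_eq_add_tsum_ite, hq z, mul_one]
      _ = _ := by
          rw [mul_add, ← ENNReal.tsum_mul_left]
          congr 1
          exact tsum_congr fun y => by split <;> simp
  calc ∑' y, Vt q t w n y
      = ∑' z, (Vt q t w n z * q z t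
          + ∑' y, (if y = t then 0 else Vt q t w n z * q z y)) := tsum_congr h1
    _ = (∑' z, Vt q t w n z * q z t)
          + ∑' z, ∑' y, (if y = t then 0 else Vt q t w n z * q z y) := ENNReal.tsum_add
    _ = (∑' z, Vt q t w n z * q z t) + ∑' y, Vt q t w (n + 1) y := by
        congr 1
        rw [ENNReal.tsum_comm]
        refine tsum_congr fun y => ?_
        show _ = Vt q t w (n+1) y
        simp only [Vt, ite_tsum_push]

lemma mass_le_one (hq : ∀ z, ∑' y, q z y = 1) (t w : X) (n : ℕ) :
    ∑' y, Vt q t w n y ≤ 1 := by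
  induction n with
  | zero => simp [mass_zero]
  | succ n ih =>
      calc ∑' y, Vt q t w (n+1) y ≤ _ + ∑' y, Vt q t w (n + 1) y := le_add_self
        _ = ∑' y, Vt q t w n y := (mass_step q hq t w n).symm
        _ ≤ 1 := ih

/-- Telescoping with a cut-off: for the pigeonhole bound on tails. -/
lemma telescope (hq : ∀ z, ∑' y, q z y = 1) (t w : X) (k : ℕ) :
    ∀ N : ℕ, (∑ m ∈ Finset.range N, if k ≤ m then ∑' z, Vt q t w m z * q z t else 0)
      + ∑' y, Vt q t w (max k N) y = ∑' y, Vt q t w k y := by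
  intro N
  induction N with
  | zero => simp
  | succ N ih =>
      rw [Finset.sum_range_succ]
      by_cases hk : k ≤ N
      · rw [if_pos hk]
        have h1 : max k N = N := max_eq_right hk
        have h2 : max k (N + 1) = N + 1 := max_eq_right (by omega)
        rw [h2, ← ih, h1, add_assoc]
        congr 1
        exact (mass_step q hq t w N).symm
      · rw [if_neg hk]
        have h1 : max k N = k := max_eq_left (by omega)
        have h2 : max k (N + 1) = k := max_eq_left (by omega)
        have h3 : (∑ m ∈ Finset.range N, if k ≤ m then ∑' z, Vt q t w m z * q z t else 0)
            = 0 := Finset.sum_eq_zero fun m hm => by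
          simp only [Finset.mem_range] at hm
          rw [if_neg (by omega)]
        rw [h2, add_zero, h3, zero_add]

lemma tail_le_mass (hq : ∀ z, ∑' y, q z y = 1) (t w : X) (k : ℕ) :
    (∑' m : ℕ, if k ≤ m then ∑' z, Vt q t w m z * q z t else 0)
      ≤ ∑' y, Vt q t w k y := by
  rw [ENNReal.tsum_eq_iSup_nat]
  refine iSup_le fun N => ?_
  rw [← telescope q hq t w k N]
  exact le_self_add

lemma ret_le_one (hq : ∀ z, ∑' y, q z y = 1) (t w : X) :
    (∑' m : ℕ, ∑' z, Vt q t w m z * q z t) ≤ ∑' y, Vt q t w 0 y := by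
  have := tail_le_mass q hq t w 0
  simpa using this

/-- Front-step recursion for the taboo probabilities. -/
lemma Vt_front (t : X) (n : ℕ) :
    ∀ w y, Vt q t w (n + 1) y = ∑' z, if z = t then 0 else q w z * Vt q t z n y := by
  induction n with
  | zero =>
      intro w y
      have h : ∀ z : X, (if z = t then 0 else q w z * Vt q t z 0 y)
          = if z = y then (if y = t then 0 else q w y) else 0 := by
        intro z
        by_cases hzy : z = y
        · subst hzy
          by_cases hzt : z = t <;> simp [Vt, hzt]
        · simp [Vt, hzy, Ne.symm hzy]
      rw [tsum_congr h, tsum_ite_eq]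
      show (if y = t then 0 else ∑' z, Vt q t w 0 z * q z y) = _
      have h2 : ∀ z : X, Vt q t w 0 z * q z y = if z = w then q w y else 0 := by
        intro z
        by_cases hzw : z = w
        · subst hzw; simp [Vt]
        · simp [Vt, hzw, Ne.symm hzw]
      rw [tsum_congr h2, tsum_ite_eq]
  | succ n ih =>
      intro w y
      by_cases hy : y = t
      · show (if y = t then (0:ℝ≥0∞) else _) = _
        rw [if_pos hy]
        symm
        refine ENNReal.tsum_eq_zero.2 fun z => ?_
        by_cases hz : z = t
        · rw [if_pos hz]
        · rw [if_neg hz]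
          have h4 : Vt q t z (n + 1) y = 0 := by
            show (if y = t then (0:ℝ≥0∞) else _) = 0
            rw [if_pos hy]
          rw [h4, mul_zero]
      · have lhs : Vt q t w (n + 2) y = ∑' u, Vt q t w (n + 1) u * q u y := by
          show (if y = t then 0 else ∑' u, Vt q t w (n+1) u * q u y) = _
          rw [if_neg hy]
        rw [lhs]
        have step1 : ∀ u, Vt q t w (n+1) u * q u y
            = ∑' z, (if z = t then 0 else q w z * Vt q t z n u) * q u y := by
          intro u; rw [ih w u, ENNReal.tsum_mul_right]
        rw [tsum_congr step1, ENNReal.tsum_comm]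
        refine tsum_congr fun z => ?_
        by_cases hz : z = t
        · simp [hz]
        · simp only [if_neg hz]
          have h3 : Vt q t z (n+1) y = ∑' u, Vt q t z n u * q u y := by
            show (if y = t then 0 else _) = _
            rw [if_neg hy]
          rw [h3, ← ENNReal.tsum_mul_left]
          exact tsum_congr fun u => by ring

/-- The occupation measure of excursions from `t` (before first return to `t`). -/
def occ (t : X) (y : X) : ℝ≥0∞ := ∑' n, Vt q t t n y

lemma occ_self (t : X) : occ q t t = 1 := by
  rw [occ, tsum_eq_zero_add' ENNReal.summable]
  have h : ∀ n : ℕ, Vt q t t (n + 1) t = 0 := fun n => by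
    show (if t = t then (0:ℝ≥0∞) else _) = 0
    rw [if_pos rfl]
  simp [h, Vt]

/-- The occupation measure is excessive. -/
lemma occ_excessive (hq : ∀ z, ∑' y, q z y = 1) (t : X) (w : X) :
    ∑' z, occ q t z * q z w ≤ occ q t w := by
  have h1 : ∑' z, occ q t z * q z w = ∑' n, ∑' z, Vt q t t n z * q z w := by
    rw [ENNReal.tsum_comm]
    exact tsum_congr fun z => by rw [occ, ENNReal.tsum_mul_right]
  rw [h1]
  by_cases hw : w = t
  · rw [hw]
    calc ∑' n, ∑' z, Vt q t t n z * q z t ≤ ∑' y, Vt q t t 0 y :=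
          ret_le_one q hq t t
      _ = 1 := mass_zero q t t
      _ = occ q t t := (occ_self q t).symm
  · have h2 : ∀ n : ℕ, ∑' z, Vt q t t n z * q z w = Vt q t t (n + 1) w := by
      intro n
      show _ = if w = t then 0 else ∑' z, Vt q t t n z * q z w
      rw [if_neg hw]
    rw [tsum_congr h2, occ]
    rw [tsum_eq_zero_add' (f := fun n => Vt q t t n w) ENNReal.summable]
    exact le_add_self

/-- Minimality: any excessive measure dominates `ν t • occ t`. -/
lemma occ_minimal (ν : X → ℝ≥0∞) (hν : ∀ w, ∑' z, ν z * q z w ≤ ν w) (t : X) :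
    ∀ y, ν t * occ q t y ≤ ν y := by
  have key : ∀ N : ℕ, ∀ y, ν t * ∑ n ∈ Finset.range N, Vt q t t n y ≤ ν y := by
    intro N
    induction N with
    | zero => intro y; simp
    | succ N ih =>
        intro y
        rw [Finset.sum_range_succ']
        by_cases hy : y = t
        · rw [hy]
          have h : ∀ n : ℕ, Vt q t t (n + 1) t = 0 := fun n => by
            show (if t = t then (0:ℝ≥0∞) else _) = 0
            rw [if_pos rfl]
          simp [h, Vt]
        · have h0 : Vt q t t 0 y = 0 := by simp [Vt, hy]
          rw [h0, add_zero]
          have h : ∀ n : ℕ, Vt q t t (n + 1) y = ∑' z, Vt q t t n z * q z y := by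
            intro n
            show (if y = t then 0 else _) = _
            rw [if_neg hy]
          calc ν t * ∑ n ∈ Finset.range N, Vt q t t (n + 1) y
              = ν t * ∑ n ∈ Finset.range N, ∑' z, Vt q t t n z * q z y := by
                rw [Finset.sum_congr rfl fun n _ => h n]
            _ = ν t * ∑' z, ∑ n ∈ Finset.range N, Vt q t t n z * q z y := by
                rw [Summable.tsum_finsetSum fun i _ => ENNReal.summable]
            _ = ∑' z, (ν t * ∑ n ∈ Finset.range N, Vt q t t n z) * q z y := by
                rw [← ENNReal.tsum_mul_left]
                exact tsum_congr fun z => by rw [← Finset.sum_mul, mul_assoc]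
            _ ≤ ∑' z, ν z * q z y :=
                ENNReal.tsum_le_tsum fun z => mul_le_mul_left (ih z) _
            _ ≤ ν y := hν y
  intro y
  rw [occ, ENNReal.tsum_eq_iSup_nat, ENNReal.mul_iSup]
  exact iSup_le fun N => key N y

lemma occ_trans (hq : ∀ z, ∑' y, q z y = 1) (a b c : X) :
    occ q a b * occ q b c ≤ occ q a c :=
  occ_minimal q (occ q a) (occ_excessive q hq a) b c

/-- Pigeonhole: a finite set with a reflexive, super-multiplicative kernel has an
element from which the kernel is everywhere at most 1. -/
lemma exists_argmax (A : Finset X) (hAne : A.Nonempty) (m : X → X → ℝ≥0∞)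
    (hrefl : ∀ a, m a a = 1) (htrans : ∀ a b c, m a b * m b c ≤ m a c) :
    ∃ x ∈ A, ∀ y ∈ A, m x y ≤ 1 := by
  by_contra hcon
  push_neg at hcon
  have hgex : ∀ a : {x // x ∈ A}, ∃ b : {x // x ∈ A}, 1 < m a.1 b.1 := by
    rintro ⟨a, ha⟩
    obtain ⟨y, hy, h⟩ := hcon a ha
    exact ⟨⟨y, hy⟩, h⟩
  choose g hg using hgex
  obtain ⟨a0, ha0⟩ := hAne
  set f : ℕ → {x // x ∈ A} := fun n => g^[n] ⟨a0, ha0⟩ with hf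
  have hstep : ∀ n, f (n + 1) = g (f n) := fun n => Function.iterate_succ_apply' g n _
  have hchain : ∀ i n, 1 < m (f i).1 (f (i + n + 1)).1 := by
    intro i n
    induction n with
    | zero =>
        have := hg (f i)
        rw [← hstep i] at this
        simpa using this
    | succ n ih =>
        have h2 : 1 < m (f (i + n + 1)).1 (f (i + n + 2)).1 := by
          have := hg (f (i + n + 1))
          rwa [← hstep (i + n + 1)] at this
        have : (1:ℝ≥0∞) < m (f i).1 (f (i + n + 1)).1 * m (f (i + n + 1)).1 (f (i + n + 2)).1 := by
          calc (1:ℝ≥0∞) < m (f i).1 (f (i + n + 1)).1 := ih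
            _ = m (f i).1 (f (i + n + 1)).1 * 1 := (mul_one _).symm
            _ ≤ _ := mul_le_mul_right h2.le _
        have h3 := lt_of_lt_of_le this (htrans _ _ _)
        have h4 : i + n + 2 = i + (n + 1) + 1 := by omega
        rwa [h4] at h3
  obtain ⟨i, j, hij, hfij⟩ := Finite.exists_ne_map_eq_of_infinite f
  rcases Ne.lt_or_gt hij with h | h
  · have := hchain i (j - i - 1)
    have hj : i + (j - i - 1) + 1 = j := by omega
    rw [hj, ← hfij, hrefl] at this
    exact lt_irrefl _ this
  · have := hchain j (i - j - 1)
    have hi : j + (i - j - 1) + 1 = i := by omega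
    rw [hi, hfij, hrefl] at this
    exact lt_irrefl _ this

section Bridge

variable (p : X → X → ℝ)

/-- `fret` is nonnegative. -/
lemma fret_nonneg (hp0 : ∀ x y, 0 ≤ p x y) : ∀ n (x y : X), 0 ≤ fret p n x y
  | 0, x, y => le_of_eq (by simp [fret])
  | 1, x, y => hp0 x y
  | (n+2), x, y => by
      show 0 ≤ ∑' z, if z = y then 0 else p x z * fret p (n+1) z y
      refine tsum_nonneg fun z => ?_
      split
      · exact le_refl 0
      · exact mul_nonneg (hp0 x z) (fret_nonneg hp0 (n+1) z y)

/-- The `ℝ≥0∞`-valued kernel. -/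
def qof : X → X → ℝ≥0∞ := fun a b => ENNReal.ofReal (p a b)

lemma qof_stochastic (hp : IsStochastic p) : ∀ z, ∑' y, qof p z y = 1 := by
  intro z
  simp only [qof]
  rw [← ENNReal.ofReal_tsum_of_nonneg (hp.1 z) (hp.2.1 z), hp.2.2 z]
  exact ENNReal.ofReal_one

lemma qof_le_one (hp : IsStochastic p) (z y : X) : qof p z y ≤ 1 := by
  rw [← qof_stochastic p hp z]
  exact ENNReal.le_tsum y

lemma Frp_le_one (hp : IsStochastic p) (t w : X) (n : ℕ) :
    ∑' z, Vt (qof p) t w n z * qof p z t ≤ 1 :=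
  calc ∑' z, Vt (qof p) t w n z * qof p z t
      ≤ ∑' z, Vt (qof p) t w n z * 1 :=
        ENNReal.tsum_le_tsum fun z => mul_le_mul_right (qof_le_one p hp z t) _
    _ = ∑' z, Vt (qof p) t w n z := by simp
    _ ≤ 1 := mass_le_one _ (qof_stochastic p hp) t w n

/-- The bridge between `fret` and the taboo probabilities. -/
lemma bridge (hp : IsStochastic p) (t : X) :
    ∀ n (w : X), ENNReal.ofReal (fret p (n + 1) w t)
      = ∑' z, Vt (qof p) t w n z * qof p z t := by
  intro n
  induction n with
  | zero =>
      intro w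
      have h : ∀ z : X, Vt (qof p) t w 0 z * qof p z t
          = if z = w then qof p w t else 0 := by
        intro z
        by_cases hzw : z = w
        · subst hzw; simp [Vt]
        · simp [Vt, hzw, Ne.symm hzw]
      rw [tsum_congr h, tsum_ite_eq]
      rfl
  | succ n ih =>
      intro w
      have hfle : ∀ u : X, fret p (n + 1) u t ≤ 1 := by
        intro u
        rw [← ENNReal.ofReal_le_one, ih u]
        exact Frp_le_one p hp t u n
      have hrhs : ∑' z, Vt (qof p) t w (n + 1) z * qof p z t
          = ∑' u, if u = t then 0
              else qof p w u * ∑' z, Vt (qof p) t u n z * qof p z t := by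
        calc ∑' z, Vt (qof p) t w (n + 1) z * qof p z t
            = ∑' z, (∑' u, if u = t then 0 else qof p w u * Vt (qof p) t u n z)
                * qof p z t := by
              exact tsum_congr fun z => by rw [Vt_front]
          _ = ∑' z, ∑' u, (if u = t then 0 else qof p w u * Vt (qof p) t u n z)
                * qof p z t :=
              tsum_congr fun z => (ENNReal.tsum_mul_right).symm
          _ = ∑' u, ∑' z, (if u = t then 0 else qof p w u * Vt (qof p) t u n z)
                * qof p z t := ENNReal.tsum_comm
          _ = ∑' u, if u = t then 0
                else qof p w u * ∑' z, Vt (qof p) t u n z * qof p z t := by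
              refine tsum_congr fun u => ?_
              by_cases hu : u = t
              · simp [hu]
              · simp only [if_neg hu]
                rw [← ENNReal.tsum_mul_left]
                exact tsum_congr fun z => by ring
      have hterm : ∀ u : X, (if u = t then 0
            else qof p w u * ∑' z, Vt (qof p) t u n z * qof p z t)
          = ENNReal.ofReal (if u = t then 0 else p w u * fret p (n + 1) u t) := by
        intro u
        by_cases hu : u = t
        · simp [hu]
        · rw [if_neg hu, if_neg hu, ← ih u, ENNReal.ofReal_mul (hp.1 w u)]
          rfl
      have hnn : ∀ u : X, 0 ≤ (if u = t then 0 else p w u * fret p (n + 1) u t) := by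
        intro u
        split
        · exact le_refl 0
        · exact mul_nonneg (hp.1 w u) (fret_nonneg p hp.1 (n+1) u t)
      have hsummable : Summable (fun u => if u = t then 0 else p w u * fret p (n + 1) u t) := by
        refine Summable.of_nonneg_of_le hnn (fun u => ?_) (hp.2.1 w)
        by_cases hu : u = t
        · rw [if_pos hu]; exact hp.1 w u
        · rw [if_neg hu]
          calc p w u * fret p (n + 1) u t ≤ p w u * 1 :=
                mul_le_mul_of_nonneg_left (hfle u) (hp.1 w u)
            _ = p w u := mul_one _
      rw [hrhs, tsum_congr hterm, ← ENNReal.ofReal_tsum_of_nonneg hnn hsummable]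
      rfl

end Bridge

end MRT

/-- under the hypothesis of Theorem 2.2 with `A` nonempty,
`min_{x ∈ A} τ̄ₓ ≤ card(A)/(1-ε)`. -/
theorem min_mean_return_time_bound {X : Type*} [Countable X]
    (p : X → X → ℝ) (hp : IsStochastic p)
    (hirr : ∀ x y : X, ∃ n : ℕ, 0 < matPow p n x y)
    (ε : ℝ) (hε : ε ∈ Set.Ioo (0 : ℝ) 1) (A : Finset X) (hAne : A.Nonempty)
    (hA : ∀ x, ∑' y, (if y ∈ A then 0 else p x y) < ε) :
    ∃ x ∈ A, (∑' n : ℕ, (n : ℝ) * fret p n x x) ≤ (A.card : ℝ) / (1 - ε) := by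
  classical
  set q : X → X → ℝ≥0∞ := MRT.qof p with hqdef
  have hq : ∀ z, ∑' y, q z y = 1 := MRT.qof_stochastic p hp
  set ε' : ℝ≥0∞ := ENNReal.ofReal ε with hε'def
  have hε'1 : ε' < 1 := by
    rw [hε'def, ← ENNReal.ofReal_one]
    exact (ENNReal.ofReal_lt_ofReal_iff one_pos).2 hε.2
  -- ENNReal version of the ε-hypothesis
  have hAq : ∀ z, ∑' y, (if y ∈ A then 0 else q z y) ≤ ε' := by
    intro z
    have h1 : ∀ y, (if y ∈ A then 0 else q z y)
        = ENNReal.ofReal (if y ∈ A then 0 else p z y) := by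
      intro y; split <;> simp [hqdef, MRT.qof]
    have hnn : ∀ y, 0 ≤ (if y ∈ A then (0:ℝ) else p z y) := by
      intro y; split
      · exact le_refl 0
      · exact hp.1 z y
    have hsum : Summable (fun y => if y ∈ A then (0:ℝ) else p z y) := by
      refine Summable.of_nonneg_of_le hnn (fun y => ?_) (hp.2.1 z)
      split
      · exact hp.1 z y
      · exact le_refl _
    rw [tsum_congr h1, ← ENNReal.ofReal_tsum_of_nonneg hnn hsum]
    exact ENNReal.ofReal_le_ofReal (hA z).le
  -- choose the base point x ∈ A
  obtain ⟨x, hxA, hxle⟩ := MRT.exists_argmax A hAne (fun a b => MRT.occ q a b)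
    (fun a => MRT.occ_self q a) (fun a b c => MRT.occ_trans q hq a b c)
  refine ⟨x, hxA, ?_⟩
  -- abbreviations
  set mass : ℕ → ℝ≥0∞ := fun k => ∑' y, MRT.Vt q x x k y with hmass
  set SC : ℕ → ℝ≥0∞ := fun k => ∑' y, if y ∈ A then 0 else MRT.Vt q x x k y with hSC
  set SAx : ℝ≥0∞ := ∑ y ∈ A, MRT.occ q x y with hSAx
  have hSAx_card : SAx ≤ (A.card : ℝ≥0∞) := by
    rw [hSAx]
    calc ∑ y ∈ A, MRT.occ q x y ≤ ∑ y ∈ A, 1 :=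
          Finset.sum_le_sum fun y hy => hxle y hy
      _ = (A.card : ℝ≥0∞) := by simp
  have mass_split : ∀ k, mass k = (∑ y ∈ A, MRT.Vt q x x k y) + SC k := by
    intro k
    have h1 : ∀ y, MRT.Vt q x x k y
        = (if y ∈ A then MRT.Vt q x x k y else 0)
          + (if y ∈ A then 0 else MRT.Vt q x x k y) := by
      intro y; split <;> simp
    rw [hmass]
    show ∑' y, MRT.Vt q x x k y = _
    rw [tsum_congr h1, ENNReal.tsum_add]
    congr 1
    rw [tsum_eq_sum (s := A) (fun b hb => if_neg hb)]
    exact Finset.sum_congr rfl fun y hy => if_pos hy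
  have SC0 : SC 0 = 0 := by
    rw [hSC]
    show (∑' y, if y ∈ A then 0 else MRT.Vt q x x 0 y) = 0
    refine ENNReal.tsum_eq_zero.2 fun y => ?_
    by_cases hy : y ∈ A
    · rw [if_pos hy]
    · rw [if_neg hy]
      have : y ≠ x := fun h => hy (h ▸ hxA)
      simp [MRT.Vt, this]
  have SCsucc : ∀ k, SC (k + 1) ≤ ε' * mass k := by
    intro k
    have h1 : ∀ y, (if y ∈ A then 0 else MRT.Vt q x x (k+1) y)
        = ∑' z, (if y ∈ A then 0 else MRT.Vt q x x k z * q z y) := by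
      intro y
      by_cases hy : y ∈ A
      · simp [hy]
      · have hyx : y ≠ x := fun h => hy (h ▸ hxA)
        rw [if_neg hy]
        have : MRT.Vt q x x (k+1) y = ∑' z, MRT.Vt q x x k z * q z y := by
          show (if y = x then 0 else _) = _
          rw [if_neg hyx]
        rw [this]
        exact tsum_congr fun z => (if_neg hy).symm
    have h2 : SC (k + 1)
        = ∑' z, ∑' y, (if y ∈ A then 0 else MRT.Vt q x x k z * q z y) := by
      rw [hSC]
      show (∑' y, if y ∈ A then 0 else MRT.Vt q x x (k+1) y) = _
      rw [tsum_congr h1, ENNReal.tsum_comm]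
    rw [h2]
    have h3 : ∀ z, ∑' y, (if y ∈ A then 0 else MRT.Vt q x x k z * q z y)
        ≤ MRT.Vt q x x k z * ε' := by
      intro z
      have h4 : ∀ y, (if y ∈ A then 0 else MRT.Vt q x x k z * q z y)
          = MRT.Vt q x x k z * (if y ∈ A then 0 else q z y) := by
        intro y; split <;> simp
      rw [tsum_congr h4, ENNReal.tsum_mul_left]
      exact mul_le_mul_right (hAq z) _
    calc ∑' z, ∑' y, (if y ∈ A then 0 else MRT.Vt q x x k z * q z y)
        ≤ ∑' z, MRT.Vt q x x k z * ε' := ENNReal.tsum_le_tsum h3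
      _ = mass k * ε' := ENNReal.tsum_mul_right
      _ = ε' * mass k := mul_comm _ _
  -- truncated expected-return bound
  have hTbound : ∀ N : ℕ,
      ∑ k ∈ Finset.range (N + 1), mass k
        ≤ SAx + ε' * ∑ k ∈ Finset.range (N + 1), mass k := by
    intro N
    have e1 : ∑ k ∈ Finset.range (N + 1), mass k
        = (∑ k ∈ Finset.range (N + 1), ∑ y ∈ A, MRT.Vt q x x k y)
          + ∑ k ∈ Finset.range (N + 1), SC k := by
      rw [← Finset.sum_add_distrib]
      exact Finset.sum_congr rfl fun k _ => mass_split k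
    have e2 : (∑ k ∈ Finset.range (N + 1), ∑ y ∈ A, MRT.Vt q x x k y) ≤ SAx := by
      rw [Finset.sum_comm, hSAx]
      exact Finset.sum_le_sum fun y _ => ENNReal.sum_le_tsum _
    have e3 : ∑ k ∈ Finset.range (N + 1), SC k
        ≤ ε' * ∑ k ∈ Finset.range (N + 1), mass k := by
      rw [Finset.sum_range_succ', SC0, add_zero]
      calc ∑ k ∈ Finset.range N, SC (k + 1)
          ≤ ∑ k ∈ Finset.range N, ε' * mass k := Finset.sum_le_sum fun k _ => SCsucc k
        _ = ε' * ∑ k ∈ Finset.range N, mass k := (Finset.mul_sum _ _ _).symm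
        _ ≤ ε' * ∑ k ∈ Finset.range (N + 1), mass k := by
            refine mul_le_mul_right ?_ _
            exact Finset.sum_le_sum_of_subset
              (Finset.range_subset_range.2 (Nat.le_succ N))
    calc ∑ k ∈ Finset.range (N + 1), mass k ≤ SAx + ∑ k ∈ Finset.range (N + 1), SC k := by
          rw [e1]; exact add_le_add_left e2 _
      _ ≤ SAx + ε' * ∑ k ∈ Finset.range (N + 1), mass k := add_le_add_right e3 _
  have h1ε0 : (1:ℝ≥0∞) - ε' ≠ 0 := by
    rw [Ne, tsub_eq_zero_iff_le, not_le]
    exact hε'1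
  have h1εt : (1:ℝ≥0∞) - ε' ≠ ∞ :=
    ne_top_of_le_ne_top ENNReal.one_ne_top tsub_le_self
  have hTdiv : ∀ N : ℕ,
      ∑ k ∈ Finset.range N, mass k ≤ SAx / (1 - ε') := by
    intro N
    rcases N with _ | N
    · simp
    · set a : ℝ≥0∞ := ∑ k ∈ Finset.range (N + 1), mass k with ha
      have hafin : a ≠ ∞ := by
        rw [ha]
        refine (ENNReal.sum_lt_top.2 fun k _ => ?_).ne
        exact lt_of_le_of_lt (MRT.mass_le_one q hq x x k) ENNReal.one_lt_top
      rw [ENNReal.le_div_iff_mul_le (Or.inl h1ε0) (Or.inl h1εt)]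
      have hms : a * (1 - ε') = a - a * ε' := by
        rw [ENNReal.mul_sub fun _ _ => hafin, mul_one]
      rw [hms, tsub_le_iff_right]
      calc a ≤ SAx + ε' * a := hTbound N
        _ = SAx + a * ε' := by rw [mul_comm]
  have hE : ∑' k, mass k ≤ SAx / (1 - ε') := by
    rw [ENNReal.tsum_eq_iSup_nat]
    exact iSup_le hTdiv
  -- the mean return time, in ℝ≥0∞
  set τ : ℝ≥0∞ := ∑' n : ℕ, (n : ℝ≥0∞) * ENNReal.ofReal (fret p n x x) with hτ
  have hτE : τ ≤ ∑' k, mass k := by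
    rw [hτ, tsum_eq_zero_add' ENNReal.summable]
    simp only [Nat.cast_zero, zero_mul, zero_add]
    have hb : ∀ n : ℕ, ((n + 1 : ℕ) : ℝ≥0∞) * ENNReal.ofReal (fret p (n + 1) x x)
        = ∑' k : ℕ, if k < n + 1 then (∑' z, MRT.Vt q x x n z * q z x) else 0 := by
      intro n
      rw [MRT.bridge p hp x n x]
      rw [tsum_eq_sum (s := Finset.range (n+1))
        (fun b hb => if_neg (by simpa using hb))]
      rw [Finset.sum_congr rfl fun k hk => if_pos (Finset.mem_range.1 hk)]
      rw [Finset.sum_const, Finset.card_range, nsmul_eq_mul]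
    rw [tsum_congr hb, ENNReal.tsum_comm]
    refine ENNReal.tsum_le_tsum fun k => ?_
    have : ∀ n : ℕ, (if k < n + 1 then (∑' z, MRT.Vt q x x n z * q z x) else 0)
        = (if k ≤ n then (∑' z, MRT.Vt q x x n z * q z x) else 0) := by
      intro n
      congr 1
      simp [Nat.lt_succ_iff]
    rw [tsum_congr this]
    exact MRT.tail_le_mass q hq x x k
  -- assemble the ℝ≥0∞ bound
  have hfinal : τ ≤ ENNReal.ofReal ((A.card : ℝ) / (1 - ε)) := by
    have h1 : (1:ℝ≥0∞) - ε' = ENNReal.ofReal (1 - ε) := by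
      rw [ENNReal.ofReal_sub 1 hε.1.le, ENNReal.ofReal_one]
    have h2 : ENNReal.ofReal ((A.card : ℝ) / (1 - ε))
        = (A.card : ℝ≥0∞) / (1 - ε') := by
      rw [ENNReal.ofReal_div_of_pos (by linarith [hε.2]), h1,
        ENNReal.ofReal_natCast]
    rw [h2]
    calc τ ≤ ∑' k, mass k := hτE
      _ ≤ SAx / (1 - ε') := hE
      _ ≤ (A.card : ℝ≥0∞) / (1 - ε') := ENNReal.div_le_div_right hSAx_card _
  -- convert back to ℝ
  have hτfin : τ ≠ ∞ := ne_top_of_le_ne_top ENNReal.ofReal_ne_top hfinal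
  have hterm : ∀ n : ℕ, ((n : ℝ≥0∞) * ENNReal.ofReal (fret p n x x)) ≠ ∞ :=
    fun n => ENNReal.mul_ne_top (ENNReal.natCast_ne_top n) ENNReal.ofReal_ne_top
  have heq : ∑' n : ℕ, (n : ℝ) * fret p n x x = τ.toReal := by
    rw [hτ, ENNReal.tsum_toReal_eq hterm]
    refine tsum_congr fun n => ?_
    rw [ENNReal.toReal_mul, ENNReal.toReal_ofReal (MRT.fret_nonneg p hp.1 n x x)]
    simp
  rw [heq]
  calc τ.toReal ≤ (ENNReal.ofReal ((A.card : ℝ) / (1 - ε))).toReal :=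
        ENNReal.toReal_mono ENNReal.ofReal_ne_top hfinal
    _ = (A.card : ℝ) / (1 - ε) := ENNReal.toReal_ofReal
        (div_nonneg (Nat.cast_nonneg _) (by linarith [hε.2]))
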